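/- Let n ≥ 1 and let U₁ ⊆ U₂ be open convex subsets of ℝⁿ with U₁ nonempty. Then invdim(U₁) ≤ invdim(U₂); that is, the dimension of the stabilizer subspace {x ∈ ℝⁿ : x + U₁ = U₁} is at most the dimension of the stabilizer subspace {x ∈ ℝⁿ : x + U₂ = U₂}. -/

import Mathlib

/-- The stabilizer of a subset of a real vector space. -/
def setStab {V : Type*} [AddCommGroup V] (U : Set V) : Set V :=
  {x : V | (fun u => x + u) '' U = U}

/-- The invariance dimension of a subset: the dimension of the real span of
its stabilizer. -/
noncomputable def invdim {V : Type*} [AddCommGroup V] [Module ℝ V] (U : Set V) : ℕ :=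
  Module.finrank ℝ (Submodule.span ℝ (setStab U))

section Aux

variable {E : Type*} [NormedAddCommGroup E] [NormedSpace ℝ E]

lemma line_mem_of_stab {U : Set E} (hconv : Convex ℝ U) {v : E} (hv : v ∈ setStab U)
    {p : E} (hp : p ∈ U) (t : ℝ) : p + t • v ∈ U := by
  have hv' : (fun u => v + u) '' U = U := hv
  have hfwd : ∀ u ∈ U, v + u ∈ U := by
    intro u hu
    have h : v + u ∈ (fun u => v + u) '' U := Set.mem_image_of_mem _ hu
    rwa [hv'] at h
  have hbwd : ∀ u ∈ U, u - v ∈ U := by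
    intro u hu
    rw [← hv'] at hu
    obtain ⟨w, hw, rfl⟩ := hu
    simpa using hw
  have hint : ∀ k : ℤ, p + (k : ℝ) • v ∈ U := by
    intro k
    induction k using Int.induction_on with
    | zero => simpa using hp
    | succ k ih =>
      have h := hfwd _ ih
      push_cast at h ⊢
      have heq : p + ((k : ℝ) + 1) • v = v + (p + (k : ℝ) • v) := by module
      rw [heq]; exact h
    | pred k ih =>
      have h := hbwd _ ih
      push_cast at h ⊢
      have heq : p + (-(k : ℝ) - 1) • v = p + (-(k : ℝ)) • v - v := by module
      rw [heq]; exact h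
  have h1 : p + ((⌊t⌋ : ℝ)) • v ∈ U := hint ⌊t⌋
  have h2 : p + ((⌊t⌋ : ℝ) + 1) • v ∈ U := by
    have := hint (⌊t⌋ + 1)
    push_cast at this
    exact this
  have ha : (0 : ℝ) ≤ 1 - (t - ⌊t⌋) := by
    have := Int.lt_floor_add_one t; linarith
  have hb : (0 : ℝ) ≤ t - ⌊t⌋ := by
    have := Int.floor_le t; linarith
  have hcomb := hconv h1 h2 ha hb (by ring)
  have heq : (1 - (t - (⌊t⌋ : ℝ))) • (p + ((⌊t⌋ : ℝ)) • v)
      + (t - (⌊t⌋ : ℝ)) • (p + ((⌊t⌋ : ℝ) + 1) • v) = p + t • v := by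
    module
  rwa [heq] at hcomb

lemma add_mem_of_line {U : Set E} (hopen : IsOpen U) (hconv : Convex ℝ U)
    {p v : E} (hline : ∀ t : ℝ, p + t • v ∈ U) {c : E} (hc : c ∈ U) : c + v ∈ U := by
  have hcont : Filter.Tendsto (fun l : ℝ => (1 - l)⁻¹ • (c - l • p)) (nhds 0) (nhds c) := by
    have h1 : Filter.Tendsto (fun l : ℝ => (1 - l)⁻¹) (nhds 0) (nhds (1 : ℝ)) := by
      have h0 : Filter.Tendsto (fun l : ℝ => 1 - l) (nhds 0) (nhds (1 : ℝ)) := by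
        simpa using ((by fun_prop : Continuous (fun l : ℝ => 1 - l)).tendsto (0 : ℝ))
      simpa using h0.inv₀ one_ne_zero
    have h2 : Filter.Tendsto (fun l : ℝ => c - l • p) (nhds 0) (nhds c) := by
      have hc2 : Continuous (fun l : ℝ => c - l • p) := by fun_prop
      simpa using hc2.tendsto (0 : ℝ)
    simpa using h1.smul h2
  have hev : ∀ᶠ l : ℝ in nhds 0, (1 - l)⁻¹ • (c - l • p) ∈ U :=
    hcont.eventually_mem (hopen.mem_nhds hc)
  have hlt : ∀ᶠ l : ℝ in nhds 0, l < 1 :=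
    Filter.Tendsto.eventually_lt_const (by norm_num) Filter.tendsto_id
  have hall : ∀ᶠ l : ℝ in nhdsWithin 0 (Set.Ioi 0),
      ((1 - l)⁻¹ • (c - l • p) ∈ U ∧ l < 1) ∧ 0 < l := by
    refine (((hev.and hlt).filter_mono nhdsWithin_le_nhds).and ?_)
    exact eventually_nhdsWithin_of_forall (fun x hx => hx)
  obtain ⟨l, ⟨hx, hl1⟩, hl0⟩ := hall.exists
  have hne : (1 : ℝ) - l ≠ 0 := by intro h; linarith [h]
  have hcomb := hconv (a := 1 - l) (b := l) hx (hline l⁻¹) (by linarith)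
    (le_of_lt hl0) (by ring)
  have heq : (1 - l) • ((1 - l)⁻¹ • (c - l • p)) + l • (p + l⁻¹ • v) = c + v := by
    rw [smul_smul, smul_add, smul_smul, mul_inv_cancel₀ hne,
      mul_inv_cancel₀ (ne_of_gt hl0), one_smul, one_smul]
    abel
  rwa [heq] at hcomb

lemma setStab_subset {U₁ U₂ : Set E} (h2open : IsOpen U₂) (h1conv : Convex ℝ U₁)
    (h2conv : Convex ℝ U₂) (hsub : U₁ ⊆ U₂) (hne : U₁.Nonempty) :
    setStab U₁ ⊆ setStab U₂ := by
  intro v hv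
  obtain ⟨p, hp⟩ := hne
  have hline : ∀ t : ℝ, p + t • v ∈ U₂ := fun t => hsub (line_mem_of_stab h1conv hv hp t)
  have hlineneg : ∀ t : ℝ, p + t • (-v) ∈ U₂ := by
    intro t
    have := hline (-t)
    simpa [smul_neg, neg_smul] using this
  have hfwd : ∀ c ∈ U₂, c + v ∈ U₂ := fun c hc => add_mem_of_line h2open h2conv hline hc
  have hbwd : ∀ c ∈ U₂, c + (-v) ∈ U₂ := fun c hc => add_mem_of_line h2open h2conv hlineneg hc
  show (fun u => v + u) '' U₂ = U₂
  apply Set.Subset.antisymm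
  · rintro _ ⟨u, hu, rfl⟩
    simpa [add_comm] using hfwd u hu
  · intro u hu
    exact ⟨u + (-v), hbwd u hu, by module⟩

end Aux

/-- Lemma: if `U₁ ⊆ U₂` are open convex subsets of `ℝⁿ` with `U₁` nonempty,
then `invdim(U₁) ≤ invdim(U₂)`. -/
theorem invdim_mono
    (n : ℕ) (hn : 1 ≤ n)
    (U₁ U₂ : Set (EuclideanSpace ℝ (Fin n)))
    (hU₁open : IsOpen U₁) (hU₂open : IsOpen U₂)
    (hU₁conv : Convex ℝ U₁) (hU₂conv : Convex ℝ U₂)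
    (hsub : U₁ ⊆ U₂) (hne : U₁.Nonempty) :
    invdim U₁ ≤ invdim U₂ := by
  have hsubset := setStab_subset hU₂open hU₁conv hU₂conv hsub hne
  exact Submodule.finrank_mono (Submodule.span_mono hsubset)
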